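/- For the divisorial polytope of threefold 3.21 (Figure 5), the pair (ψ : x ↦ 1/x on ℙ¹, F = [[0,1],[1,0]] ∈ GL(2,ℤ)) satisfies Ψ₀ ∘ F = Ψ_∞ and Ψ_∞ ∘ F = Ψ₀ and Ψ₁ ∘ F = Ψ₁, where Ψ₀, Ψ_∞, Ψ₁ are the piecewise affine functions on Box = conv{(-2,1),(-3,3),(-1,3),(3,-1),(3,-3),(1,-2)} determined by: Ψ₀ has values 0,0,0,-2,-2,-1 at those respective vertices with the region conv{(-1,0),(-1,3),(3,-1),(3,-3),(1,-2),(-2,1)} shaded (slope (-1/2,0) there), Ψ_∞ = Ψ₀ ∘ swap, and Ψ₁ has vertex values 1,2,2,2,2,1 with a crease along the segment from (-3,3) to (3,-3). -/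
import Mathlib


/-- The symmetry of the divisorial polytope of the Fano threefold 3.21: with
Box the hexagon conv{(-2,1),(-3,3),(-1,3),(3,-1),(3,-3),(1,-2)},
Ψ₀(x,y) = min(0, -(x+1)/2) (vertex values 0,0,0,-2,-2,-1, slope (-1/2,0) on
the shaded region), Ψ_∞ = Ψ₀ ∘ swap, and Ψ₁(x,y) = min(2, x+y+2) (vertex
values 1,2,2,2,2,1 with crease along the segment from (-3,3) to (3,-3)),
the lattice automorphism F = [[0,1],[1,0]] (the swap (x,y) ↦ (y,x)) with
F(Box) = Box satisfies Ψ₀ ∘ F = Ψ_∞, Ψ_∞ ∘ F = Ψ₀ and Ψ₁ ∘ F = Ψ₁ on Box. -/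
theorem stmt_19 (Box : Set (ℝ × ℝ))
    (hBox : Box = convexHull ℝ
      {((-2 : ℝ), (1 : ℝ)), (-3, 3), (-1, 3), (3, -1), (3, -3), (1, -2)})
    (F : ℝ × ℝ → ℝ × ℝ) (hF : ∀ p, F p = (p.2, p.1))
    (Ψ₀ Ψinf Ψ₁ : ℝ × ℝ → ℝ)
    (h₀ : ∀ p ∈ Box, Ψ₀ p = min 0 (-(p.1 + 1) / 2))
    (hinf : ∀ p ∈ Box, Ψinf p = min 0 (-(p.2 + 1) / 2))
    (h₁ : ∀ p ∈ Box, Ψ₁ p = min 2 (p.1 + p.2 + 2)) :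
    F '' Box = Box ∧
    (∀ p ∈ Box, Ψ₀ (F p) = Ψinf p) ∧
    (∀ p ∈ Box, Ψinf (F p) = Ψ₀ p) ∧
    (∀ p ∈ Box, Ψ₁ (F p) = Ψ₁ p) := by
  have hFeq : F = (LinearEquiv.prodComm ℝ ℝ ℝ : ℝ × ℝ →ₗ[ℝ] ℝ × ℝ) := by
    funext p; rw [hF]; rfl
  have himg : F '' Box = Box := by
    rw [hFeq, hBox, LinearMap.image_convexHull]
    congr 1
    ext q
    simp only [Set.mem_image, Set.mem_insert_iff, Set.mem_singleton_iff]
    constructor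
    · rintro ⟨a, hab, rfl⟩
      rcases hab with rfl|rfl|rfl|rfl|rfl|rfl <;> simp [Prod.ext_iff]
    · intro hq
      rcases hq with rfl|rfl|rfl|rfl|rfl|rfl
      · exact ⟨(1,-2), by simp, rfl⟩
      · exact ⟨(3,-3), by simp, rfl⟩
      · exact ⟨(3,-1), by simp, rfl⟩
      · exact ⟨(-1,3), by simp, rfl⟩
      · exact ⟨(-3,3), by simp, rfl⟩
      · exact ⟨(-2,1), by simp, rfl⟩
  have hmem : ∀ p ∈ Box, F p ∈ Box := fun p hp => himg ▸ ⟨p, hp, rfl⟩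
  refine ⟨himg, ?_, ?_, ?_⟩
  · intro p hp; rw [h₀ _ (hmem p hp), hinf _ hp, hF]
  · intro p hp; rw [hinf _ (hmem p hp), h₀ _ hp, hF]
  · intro p hp; rw [h₁ _ (hmem p hp), h₁ _ hp, hF]; ring_nf
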